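/- Let Δ ⊆ ℕ^d be a finite standard set. The Connect Four decompositions of Δ are in bijection with the standard decompositions of the standard graph G(Δ). -/

import Mathlib

open Pointwise

/-- A *standard set* in `ℕ^n`: a finite set whose complement `C` satisfies `C + ℕ^n = C`. -/
def IsStdSet {n : ℕ} (S : Set (Fin n → ℕ)) : Prop :=
  S.Finite ∧ Sᶜ + (Set.univ : Set (Fin n → ℕ)) = Sᶜ

/-- Projection `ℕ^{d+1} → ℕ^d` to the first `d` coordinates. -/
def proj {d : ℕ} (b : Fin (d + 1) → ℕ) : Fin d → ℕ := fun i => b i.castSucc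

/-- The *height* of `S ⊆ ℕ^{d+1}` over `γ ∈ ℕ^d`: the cardinality of the fiber of the
projection over `γ`. -/
noncomputable def height {d : ℕ} (S : Set (Fin (d + 1) → ℕ)) (g : Fin d → ℕ) : ℕ :=
  {b ∈ S | proj b = g}.ncard

/-- The *Connect Four sum* of two subsets of `ℕ^{d+1}`. -/
def C4sum {d : ℕ} (S T : Set (Fin (d + 1) → ℕ)) : Set (Fin (d + 1) → ℕ) :=
  {b | b (Fin.last d) < height S (proj b) + height T (proj b)}

/-- The edge set of the standard graph of `Δ`: edges `(γ + e_i, γ)` between nodes. -/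
def sEdges {d : ℕ} (S : Set (Fin (d + 1) → ℕ)) : Set ((Fin d → ℕ) × (Fin d → ℕ)) :=
  {p | p.1 ∈ proj '' S ∧ p.2 ∈ proj '' S ∧ ∃ i : Fin d, p.1 = p.2 + Pi.single i 1}

/-- A *standard component* of the standard graph of `Δ`: a standard `{0,1}`-labeling of
the nodes (zero outside the nodes), not identically zero, whose difference from the
height labeling is again standard. -/
def IsStdCompOf {d : ℕ} (S : Set (Fin (d + 1) → ℕ)) (H : (Fin d → ℕ) → ℕ) : Prop :=
  (∀ g, H g ≤ 1) ∧ (∀ g, g ∉ proj '' S → H g = 0) ∧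
  (∀ p ∈ sEdges S, H p.1 ≤ H p.2) ∧
  (∀ g, H g ≤ height S g) ∧
  (∀ p ∈ sEdges S, height S p.1 - H p.1 ≤ height S p.2 - H p.2) ∧
  (∃ g, H g ≠ 0)

/-- A *standard decomposition* of the standard graph of `Δ`: a multiset of standard
components whose labels sum pointwise to the height labeling of `Δ`. -/
def IsStdDecompOf {d : ℕ} (S : Set (Fin (d + 1) → ℕ))
    (D : Multiset ((Fin d → ℕ) → ℕ)) : Prop :=
  (∀ H ∈ D, IsStdCompOf S H) ∧ ∀ g, (D.map (fun H => H g)).sum = height S g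

/-- A *Connect Four decomposition* of `Δ ⊆ ℕ^{d+1}`: a multiset of nonempty standard sets
in `ℕ^d` (each viewed in `ℕ^{d+1}` via `γ ↦ (γ, 0)`) whose Connect Four sum is `Δ`;
equivalently, `β ∈ Δ` iff the last coordinate of `β` is less than the number of members
containing the projection of `β` (counted with multiplicity). -/
def IsC4Decomp {d : ℕ} (S : Set (Fin (d + 1) → ℕ))
    (D : Multiset (Set (Fin d → ℕ))) : Prop :=
  (∀ T ∈ D, IsStdSet T ∧ T.Nonempty) ∧
  ∀ b, b ∈ S ↔ b (Fin.last d) <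
    (D.map (fun T => T.indicator (fun _ => 1) (proj b))).sum

namespace C4Aux
variable {d : ℕ}

lemma snoc_add (a b : Fin d → ℕ) (x y : ℕ) :
    (Fin.snoc a x + Fin.snoc b y : Fin (d+1) → ℕ) = Fin.snoc (a+b) (x+y) := by
  funext i
  refine Fin.lastCases ?_ ?_ i <;> simp

lemma proj_snoc (g : Fin d → ℕ) (k : ℕ) : proj (Fin.snoc g k) = g := by
  funext i; simp [proj]

lemma snoc_proj (b : Fin (d+1) → ℕ) : Fin.snoc (proj b) (b (Fin.last d)) = b :=
  Fin.snoc_init_self b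

def lastK (S : Set (Fin (d+1) → ℕ)) (g : Fin d → ℕ) : Set ℕ := {k | Fin.snoc g k ∈ S}

lemma snoc_injective (g : Fin d → ℕ) :
    Function.Injective (fun k => (Fin.snoc g k : Fin (d+1) → ℕ)) := by
  intro k j h
  have := congrFun h (Fin.last d)
  simpa using this

lemma height_eq (S : Set (Fin (d+1) → ℕ)) (g : Fin d → ℕ) :
    height S g = (lastK S g).ncard := by
  have h : {b ∈ S | proj b = g} = (fun k => (Fin.snoc g k : Fin (d+1) → ℕ)) '' lastK S g := by
    ext b
    constructor
    · rintro ⟨hb, hp⟩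
      subst hp
      refine ⟨b (Fin.last d), ?_, snoc_proj b⟩
      show Fin.snoc (proj b) (b (Fin.last d)) ∈ S
      rw [snoc_proj]
      exact hb
    · rintro ⟨k, hk, rfl⟩
      exact ⟨hk, proj_snoc _ _⟩
  rw [height, h, Set.ncard_image_of_injective _ (snoc_injective g)]

lemma ncard_Iio (n : ℕ) : (Set.Iio n).ncard = n := by
  rw [← Finset.coe_Iio, Set.ncard_coe_finset]
  simp

lemma ncard_Iic (n : ℕ) : (Set.Iic n).ncard = n + 1 := by
  rw [← Finset.coe_Iic, Set.ncard_coe_finset]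
  simp

lemma down_eq_Iio (K : Set ℕ) (hf : K.Finite) (hd : ∀ k ∈ K, ∀ j ≤ k, j ∈ K) :
    K = Set.Iio K.ncard := by
  ext k
  simp only [Set.mem_Iio]
  constructor
  · intro hk
    have hsub : Set.Iic k ⊆ K := fun j hj => hd k hk j hj
    have h1 : (Set.Iic k).ncard ≤ K.ncard := Set.ncard_le_ncard hsub hf
    rw [ncard_Iic] at h1
    omega
  · intro hk
    by_contra hkK
    have hsub : K ⊆ Set.Iio k := by
      intro m hm
      by_contra h
      rw [Set.mem_Iio] at h
      push_neg at h
      exact hkK (hd m hm k h)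
    have := Set.ncard_le_ncard hsub (Set.finite_Iio k)
    rw [ncard_Iio] at this
    omega

end C4Aux

namespace C4Aux
variable {d : ℕ}

lemma mem_of_add {n : ℕ} {S : Set (Fin n → ℕ)} (hS : IsStdSet S) {b v : Fin n → ℕ}
    (h : b + v ∈ S) : b ∈ S := by
  by_contra hb
  have : b + v ∈ Sᶜ := by
    rw [← hS.2]
    exact Set.add_mem_add hb (Set.mem_univ v)
  exact this h

lemma lastK_eq {S : Set (Fin (d+1) → ℕ)} (hS : IsStdSet S) (g : Fin d → ℕ) :
    lastK S g = Set.Iio (height S g) := by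
  rw [height_eq]
  apply down_eq_Iio
  · have hsub : lastK S g ⊆ (fun k => (Fin.snoc g k : Fin (d+1) → ℕ)) ⁻¹' S := fun k hk => hk
    exact Set.Finite.subset (Set.Finite.preimage
      (Set.injOn_of_injective (snoc_injective g)) hS.1) hsub
  · intro k hk j hj
    have : (Fin.snoc g j + Fin.snoc (0 : Fin d → ℕ) (k - j) : Fin (d+1) → ℕ) = Fin.snoc g k := by
      rw [snoc_add, add_zero]
      rw [Nat.add_sub_cancel' hj]
    exact mem_of_add hS (by rw [this]; exact hk)

lemma mem_iff_lt_height {S : Set (Fin (d+1) → ℕ)} (hS : IsStdSet S) (b : Fin (d+1) → ℕ) :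
    b ∈ S ↔ b (Fin.last d) < height S (proj b) := by
  have h1 : b ∈ S ↔ (b (Fin.last d)) ∈ lastK S (proj b) := by
    rw [lastK, Set.mem_setOf_eq, snoc_proj]
  rw [h1, lastK_eq hS, Set.mem_Iio]

lemma proj_image_step {S : Set (Fin (d+1) → ℕ)} (hS : IsStdSet S) {g : Fin d → ℕ} {i : Fin d}
    (h : g + Pi.single i 1 ∈ proj '' S) : g ∈ proj '' S := by
  obtain ⟨b, hb, hpb⟩ := h
  refine ⟨Fin.snoc g (b (Fin.last d)), ?_, proj_snoc _ _⟩
  have heq : Fin.snoc g (b (Fin.last d)) + Fin.snoc (Pi.single i 1) 0 = b := by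
    rw [snoc_add, add_zero, ← hpb, snoc_proj]
  exact mem_of_add hS (by rw [heq]; exact hb)

lemma height_of_mem_iff {S : Set (Fin (d+1) → ℕ)} (N : (Fin d → ℕ) → ℕ)
    (h : ∀ b, b ∈ S ↔ b (Fin.last d) < N (proj b)) (g : Fin d → ℕ) :
    height S g = N g := by
  rw [height_eq]
  have : lastK S g = Set.Iio (N g) := by
    ext k
    simp [lastK, h, proj_snoc]
  rw [this, ncard_Iio]

lemma down_closed_of_step {n : ℕ} (T : Set (Fin n → ℕ))
    (h : ∀ g i, g + Pi.single i 1 ∈ T → g ∈ T) :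
    ∀ (v c : Fin n → ℕ), c + v ∈ T → c ∈ T := by
  suffices H : ∀ (m : ℕ) (v : Fin n → ℕ), (∑ i, v i) = m → ∀ c, c + v ∈ T → c ∈ T by
    exact fun v c => H _ v rfl c
  intro m
  induction m with
  | zero =>
    intro v hv c hc
    have hv0 : v = 0 := by
      funext i
      exact Finset.sum_eq_zero_iff.mp hv i (Finset.mem_univ i)
    rw [hv0, add_zero] at hc
    exact hc
  | succ m ih =>
    intro v hv c hc
    obtain ⟨i, hi⟩ : ∃ i, v i ≠ 0 := by
      by_contra h'
      push_neg at h'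
      simp [h'] at hv
    have hself : v i + ∑ j ∈ Finset.univ.erase i, v j = m + 1 := by
      rw [Finset.add_sum_erase _ v (Finset.mem_univ i), hv]
    set v' := Function.update v i (v i - 1) with hv'def
    have hsum' : ∑ j, v' j = m := by
      rw [Finset.sum_update_of_mem (Finset.mem_univ i), ← Finset.erase_eq]
      omega
    have hvv : v = v' + Pi.single i 1 := by
      funext j
      by_cases hj : j = i
      · subst hj
        simp [hv'def, Function.update_self]
        omega
      · simp [hv'def, Function.update_of_ne hj, Pi.single_eq_of_ne hj]
    have hstep : (c + v') + Pi.single i 1 ∈ T := by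
      rw [add_assoc, ← hvv]
      exact hc
    exact ih v' hsum' c (h _ i hstep)

lemma compl_add_univ {n : ℕ} (T : Set (Fin n → ℕ))
    (h : ∀ g i, g + Pi.single i 1 ∈ T → g ∈ T) :
    Tᶜ + (Set.univ : Set (Fin n → ℕ)) = Tᶜ := by
  apply Set.Subset.antisymm
  · rintro x hx
    rw [Set.mem_add] at hx
    obtain ⟨c, hc, v, -, rfl⟩ := hx
    intro hmem
    exact hc (down_closed_of_step T h v c hmem)
  · intro x hx
    exact ⟨x, hx, 0, Set.mem_univ 0, (add_zero x)⟩

end C4Aux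

namespace C4Aux
variable {d : ℕ}

lemma fwd {S : Set (Fin (d+1) → ℕ)} {D : Multiset (Set (Fin d → ℕ))}
    (hD : IsC4Decomp S D) :
    IsStdDecompOf S (D.map (fun T => T.indicator (fun _ => 1))) := by
  classical
  obtain ⟨hmem, hiff⟩ := hD
  set N : (Fin d → ℕ) → ℕ :=
    fun g => (D.map (fun T => T.indicator (fun _ => 1) g)).sum with hN
  have hht : ∀ g, height S g = N g := height_of_mem_iff N (fun b => hiff b)
  constructor
  · intro H hH
    rw [Multiset.mem_map] at hH
    obtain ⟨T, hT, rfl⟩ := hH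
    obtain ⟨hTstd, hTne⟩ := hmem T hT
    have hle : ∀ g, T.indicator (fun _ => (1:ℕ)) g ≤ N g := by
      intro g
      exact Multiset.single_le_sum (fun x _ => Nat.zero_le x) _
        (Multiset.mem_map_of_mem _ hT)
    have hstep : ∀ (T' : Set (Fin d → ℕ)), IsStdSet T' →
        ∀ (g : Fin d → ℕ) (i : Fin d), g + Pi.single i 1 ∈ T' → g ∈ T' := by
      intro T' hT'std g i hgi
      by_contra hg
      have : g + Pi.single i 1 ∈ T'ᶜ := by
        rw [← hT'std.2]
        exact Set.add_mem_add hg (Set.mem_univ _)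
      exact this hgi
    refine ⟨?_, ?_, ?_, ?_, ?_, ?_⟩
    · intro g
      by_cases hg : g ∈ T <;> simp [hg]
    · intro g hg
      by_contra h0
      have hgT : g ∈ T := by
        by_contra h'
        exact h0 (Set.indicator_of_notMem h' _)
      have h1 : 1 ≤ N g := le_trans (by simp [hgT]) (hle g)
      apply hg
      refine ⟨Fin.snoc g 0, ?_, proj_snoc g 0⟩
      rw [hiff]
      rw [proj_snoc]
      simpa using (show 0 < N g from h1)
    · intro p hp
      obtain ⟨-, -, i, hpi⟩ := hp
      by_cases h1 : p.1 ∈ T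
      · have h2 : p.2 ∈ T := hstep T hTstd p.2 i (hpi ▸ h1)
        simp [h1, h2]
      · simp [h1]
    · intro g
      rw [hht g]
      exact hle g
    · intro p hp
      obtain ⟨-, -, i, hpi⟩ := hp
      rw [hht p.1, hht p.2]
      have key : ∀ (g : Fin d → ℕ), N g - T.indicator (fun _ => 1) g
          = ((D.erase T).map (fun T' => T'.indicator (fun _ => (1:ℕ)) g)).sum := by
        intro g
        have h1 : N g = T.indicator (fun _ => 1) g
            + ((D.erase T).map (fun T' => T'.indicator (fun _ => (1:ℕ)) g)).sum := by
          show (Multiset.map (fun T => T.indicator (fun _ => (1:ℕ)) g) D).sum = _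
          conv_lhs => rw [← Multiset.cons_erase hT]
          rw [Multiset.map_cons, Multiset.sum_cons]
        omega
      rw [key, key]
      apply Multiset.sum_map_le_sum_map
      intro T' hT'
      have hT'std := (hmem T' (Multiset.mem_of_mem_erase hT')).1
      by_cases h1 : p.1 ∈ T'
      · have h2 : p.2 ∈ T' := hstep T' hT'std p.2 i (hpi ▸ h1)
        simp [h1, h2]
      · simp [h1]
    · obtain ⟨g, hg⟩ := hTne
      exact ⟨g, by simp [hg]⟩
  · intro g
    rw [Multiset.map_map]
    exact (hht g).symm

lemma bwd {S : Set (Fin (d+1) → ℕ)} (hS : IsStdSet S) {D : Multiset ((Fin d → ℕ) → ℕ)}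
    (hD : IsStdDecompOf S D) :
    IsC4Decomp S (D.map (fun H => {g | H g ≠ 0})) := by
  obtain ⟨hcomp, hsum⟩ := hD
  constructor
  · intro T hT
    rw [Multiset.mem_map] at hT
    obtain ⟨H, hH, rfl⟩ := hT
    obtain ⟨h1, h2, h3, h4, h5, h6⟩ := hcomp H hH
    refine ⟨⟨?_, ?_⟩, ?_⟩
    · apply Set.Finite.subset (hS.1.image proj)
      intro g hg
      by_contra h
      exact hg (h2 g h)
    · apply compl_add_univ
      intro g i hgi
      have hn1 : g + Pi.single i 1 ∈ proj '' S := by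
        by_contra h
        exact hgi (h2 _ h)
      have hn2 : g ∈ proj '' S := proj_image_step hS hn1
      have hedge : ((g + Pi.single i 1, g) : _ × _) ∈ sEdges S := ⟨hn1, hn2, i, rfl⟩
      have hmono := h3 _ hedge
      simp only [Set.mem_setOf_eq] at hgi ⊢
      simp only at hmono
      omega
    · obtain ⟨g, hg⟩ := h6
      exact ⟨g, hg⟩
  · intro b
    rw [mem_iff_lt_height hS b, Multiset.map_map]
    have heq : (D.map ((fun T : Set (Fin d → ℕ) => T.indicator (fun _ => (1:ℕ)) (proj b))
        ∘ (fun H => {g | H g ≠ 0}))).sum = (D.map (fun H => H (proj b))).sum := by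
      apply congrArg Multiset.sum
      apply Multiset.map_congr rfl
      intro H hH
      have h1 := (hcomp H hH).1
      by_cases h : H (proj b) = 0
      · simp [Set.indicator_apply, h]
      · have hone : H (proj b) = 1 :=
          le_antisymm (h1 _) (Nat.one_le_iff_ne_zero.mpr h)
        simp [Set.indicator_apply, h, hone]
    rw [heq, hsum (proj b)]

end C4Aux

open C4Aux in
theorem c4Decomp_equiv_stdDecomp {d : ℕ} (S : Set (Fin (d + 1) → ℕ))
    (hS : IsStdSet S) :
    Nonempty ({D : Multiset (Set (Fin d → ℕ)) // IsC4Decomp S D} ≃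
      {D : Multiset ((Fin d → ℕ) → ℕ) // IsStdDecompOf S D}) := by
  refine ⟨{
    toFun := fun D => ⟨D.1.map (fun T => T.indicator (fun _ => 1)), fwd D.2⟩
    invFun := fun D => ⟨D.1.map (fun H => {g | H g ≠ 0}), bwd hS D.2⟩
    left_inv := ?_
    right_inv := ?_ }⟩
  · rintro ⟨D, hD⟩
    apply Subtype.ext
    simp only
    rw [Multiset.map_map]
    have h : ∀ T ∈ D, ((fun H : (Fin d → ℕ) → ℕ => {g | H g ≠ 0})
        ∘ (fun T : Set (Fin d → ℕ) => T.indicator (fun _ => (1:ℕ)))) T = id T := by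
      intro T _
      ext g
      by_cases hg : g ∈ T <;> simp [hg]
    rw [Multiset.map_congr rfl h, Multiset.map_id]
  · rintro ⟨D, hD⟩
    apply Subtype.ext
    simp only
    rw [Multiset.map_map]
    have h : ∀ H ∈ D, ((fun T : Set (Fin d → ℕ) => T.indicator (fun _ => (1:ℕ)))
        ∘ (fun H : (Fin d → ℕ) → ℕ => {g | H g ≠ 0})) H = id H := by
      intro H hH
      have h1 := (hD.1 H hH).1
      funext g
      by_cases hg : H g = 0
      · simp [Set.indicator_apply, hg]
      · have hone : H g = 1 := le_antisymm (h1 g) (Nat.one_le_iff_ne_zero.mpr hg)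
        simp [Set.indicator_apply, hg, hone]
    rw [Multiset.map_congr rfl h, Multiset.map_id]
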